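/- Let (Y,T) be a 3-equivalenced association scheme. For all u ∈ T ∖ {1_Y}, exactly one of the following holds: (i) there is w ∈ T with w ≠ w* and σ_u σ_{u*} = 3 σ_{1_Y} + σ_w + σ_{w*}; or (ii) u = u* and σ_u σ_{u*} = 3 σ_{1_Y} + 2 σ_u. -/

import Mathlib

open Matrix BigOperators Kronecker
open scoped Classical

section Defs

variable {Z : Type*} [Fintype Z] [DecidableEq Z]

/-- The identity (diagonal) relation on `Z`. -/
def diagRel (Z : Type*) [Fintype Z] [DecidableEq Z] : Finset (Z × Z) :=
  Finset.univ.filter fun p => p.1 = p.2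

/-- The converse relation. -/
def convRel (s : Finset (Z × Z)) : Finset (Z × Z) := s.image fun p => (p.2, p.1)

/-- The intersection number `p_{st}^u`, computed at an arbitrary pair of `u`. -/
noncomputable def pNum (s t u : Finset (Z × Z)) : ℕ :=
  if h : u.Nonempty then
    (Finset.univ.filter fun z => (h.choose.1, z) ∈ s ∧ (z, h.choose.2) ∈ t).card
  else 0

/-- The valency `n_s = p_{s s*}^{1}`. -/
noncomputable def valency (s : Finset (Z × Z)) : ℕ := pNum s (convRel s) (diagRel Z)

/-- The adjacency matrix of a relation. -/
def adjMat (s : Finset (Z × Z)) : Matrix Z Z ℂ :=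
  Matrix.of fun x y => if (x, y) ∈ s then 1 else 0

/-- The diagonal 0/1 matrix of a subset. -/
def eps (U : Finset Z) : Matrix Z Z ℂ := Matrix.diagonal fun i => if i ∈ U then 1 else 0

/-- The all-ones matrix. -/
def allOnes (Z : Type*) : Matrix Z Z ℂ := Matrix.of fun _ _ => 1

/-- `pointFiber x s = xs = {y : (x,y) ∈ s}`. -/
def pointFiber (x : Z) (s : Finset (Z × Z)) : Finset Z :=
  Finset.univ.filter fun y => (x, y) ∈ s

/-- An association scheme on a finite set `Z`: a partition of `Z × Z` into nonempty
relations containing the identity relation, closed under converse, and with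
well-defined intersection numbers. -/
structure AssocScheme (Z : Type*) [Fintype Z] [DecidableEq Z] where
  rels : Finset (Finset (Z × Z))
  nonempty_mem : ∀ s ∈ rels, s.Nonempty
  cover : ∀ p : Z × Z, ∃ s ∈ rels, p ∈ s
  pairwise_disjoint : ∀ s ∈ rels, ∀ t ∈ rels, s ≠ t → Disjoint s t
  id_mem : diagRel Z ∈ rels
  conv_mem : ∀ s ∈ rels, convRel s ∈ rels
  pconst : ∀ s ∈ rels, ∀ t ∈ rels, ∀ u ∈ rels, ∀ p ∈ u, ∀ q ∈ u,
    (Finset.univ.filter fun z => (p.1, z) ∈ s ∧ (z, p.2) ∈ t).card =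
    (Finset.univ.filter fun z => (q.1, z) ∈ s ∧ (z, q.2) ∈ t).card

/-- A scheme is 3-equivalenced when it has more than one point and every
non-identity basic relation has valency 3. -/
def ThreeEquivalenced (B : AssocScheme Z) : Prop :=
  1 < Fintype.card Z ∧ ∀ t ∈ B.rels, t ≠ diagRel Z → valency t = 3

/-- A scheme is k-equivalenced when it has more than one point and every
non-identity basic relation has valency k. -/
def KEquivalenced (B : AssocScheme Z) (k : ℕ) : Prop :=
  1 < Fintype.card Z ∧ ∀ t ∈ B.rels, t ≠ diagRel Z → valency t = k

/-- A scheme is imprimitive if some union of basic relations is an equivalence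
relation different from the identity relation and from the full relation. -/
def Imprimitive (B : AssocScheme Z) : Prop :=
  ∃ R ⊆ B.rels, Equivalence (fun x y : Z => (x, y) ∈ R.sup id) ∧
    R.sup id ≠ diagRel Z ∧ R.sup id ≠ Finset.univ

/-- A coherent algebra: a subalgebra of the matrix algebra containing the all-ones
matrix (and the identity), closed under conjugate transpose and Hadamard product. -/
def IsCoherent (𝒜 : Subalgebra ℂ (Matrix Z Z ℂ)) : Prop :=
  allOnes Z ∈ 𝒜 ∧ (∀ M ∈ 𝒜, Mᴴ ∈ 𝒜) ∧
  ∀ M ∈ 𝒜, ∀ N ∈ 𝒜, Matrix.hadamard M N ∈ 𝒜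

/-- The one-point-extension algebra: the smallest coherent algebra containing all
adjacency matrices of the scheme and the diagonal matrix unit at `x`. -/
noncomputable def onePointAlg (B : AssocScheme Z) (x : Z) : Subalgebra ℂ (Matrix Z Z ℂ) :=
  sInf {𝒜 | IsCoherent 𝒜 ∧ (∀ s ∈ B.rels, adjMat s ∈ 𝒜) ∧ eps {x} ∈ 𝒜}

/-- A matrix has only 0/1 entries. -/
def IsZeroOne (M : Matrix Z Z ℂ) : Prop := ∀ i j, M i j = 0 ∨ M i j = 1

/-- A basic relation matrix of a coherent algebra: a nonzero 0/1 matrix in the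
algebra whose only 0/1 minorants in the algebra are 0 and itself. -/
def IsBasicMatrix (𝒜 : Subalgebra ℂ (Matrix Z Z ℂ)) (B : Matrix Z Z ℂ) : Prop :=
  B ∈ 𝒜 ∧ IsZeroOne B ∧ B ≠ 0 ∧
  ∀ C ∈ 𝒜, IsZeroOne C → (∀ i j, C i j = 1 → B i j = 1) → C = 0 ∨ C = B

/-- The Terwilliger algebra of a scheme with respect to the base point `x`. -/
noncomputable def terwAlg (B : AssocScheme Z) (x : Z) : Subalgebra ℂ (Matrix Z Z ℂ) :=
  Algebra.adjoin ℂ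
    ({M | ∃ s ∈ B.rels, M = adjMat s} ∪ {M | ∃ s ∈ B.rels, M = eps (pointFiber x s)})

/-- A central primitive idempotent of a (set underlying a) matrix algebra: a nonzero
central idempotent that is not the sum of two nonzero orthogonal central idempotents. -/
def IsCPI {n : Type*} [Fintype n] [DecidableEq n] (𝒜 : Set (Matrix n n ℂ))
    (e : Matrix n n ℂ) : Prop :=
  e ∈ 𝒜 ∧ e ≠ 0 ∧ e * e = e ∧ (∀ a ∈ 𝒜, a * e = e * a) ∧
  ¬∃ f g : Matrix n n ℂ, f ∈ 𝒜 ∧ g ∈ 𝒜 ∧ f ≠ 0 ∧ g ≠ 0 ∧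
    f * f = f ∧ g * g = g ∧ (∀ a ∈ 𝒜, a * f = f * a) ∧ (∀ a ∈ 𝒜, a * g = g * a) ∧
    f * g = 0 ∧ g * f = 0 ∧ e = f + g

/-- The trivial central primitive idempotent
`∑_{s∈S} n_s⁻¹ ε_{x s} J ε_{x s}` of the Terwilliger algebra. -/
noncomputable def trivTerwIdem (B : AssocScheme Z) (x : Z) : Matrix Z Z ℂ :=
  ∑ s ∈ B.rels, ((valency s : ℂ)⁻¹) •
    (eps (pointFiber x s) * allOnes Z * eps (pointFiber x s))

/-- The adjacency algebra `A(S) = span{σ_s : s ∈ S}` as a set of matrices. -/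
def adjAlgSet (B : AssocScheme Z) : Set (Matrix Z Z ℂ) :=
  ↑(Submodule.span ℂ {M | ∃ s ∈ B.rels, M = adjMat s})

end Defs

section Wreath

variable {X Y : Type*} [Fintype X] [DecidableEq X] [Fintype Y] [DecidableEq Y]

/-- Generators of the Terwilliger algebra of the wreath product at `(x₀, y₀)`. -/
def wreathGens (A : AssocScheme X) (B : AssocScheme Y) (x₀ : X) (y₀ : Y) :
    Set (Matrix (X × Y) (X × Y) ℂ) :=
  {M | ∃ s ∈ A.rels, M = adjMat s ⊗ₖ (1 : Matrix Y Y ℂ)} ∪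
  {M | ∃ s ∈ A.rels, M = eps (pointFiber x₀ s) ⊗ₖ eps ({y₀} : Finset Y)} ∪
  {M | ∃ t ∈ B.rels, t ≠ diagRel Y ∧ M = allOnes X ⊗ₖ adjMat t} ∪
  {M | ∃ t ∈ B.rels, t ≠ diagRel Y ∧ M = (1 : Matrix X X ℂ) ⊗ₖ eps (pointFiber y₀ t)}

/-- The Terwilliger algebra of the wreath product at `(x₀, y₀)`. -/
noncomputable def wreathTerw (A : AssocScheme X) (B : AssocScheme Y) (x₀ : X) (y₀ : Y) :
    Subalgebra ℂ (Matrix (X × Y) (X × Y) ℂ) :=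
  Algebra.adjoin ℂ (wreathGens A B x₀ y₀)

/-- The relation `s̃` of the wreath product coming from `s ∈ S`. -/
def tildeRel (s : Finset (X × X)) : Finset ((X × Y) × (X × Y)) :=
  Finset.univ.filter fun p => (p.1.1, p.2.1) ∈ s ∧ p.1.2 = p.2.2

/-- The relation `t̄` of the wreath product coming from `t ∈ T \ {1}`. -/
def barRel (t : Finset (Y × Y)) : Finset ((X × Y) × (X × Y)) :=
  Finset.univ.filter fun p => (p.1.2, p.2.2) ∈ t

/-- The basic relations of the wreath product `S ≀ T`. -/
def wreathRels (A : AssocScheme X) (B : AssocScheme Y) :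
    Finset (Finset ((X × Y) × (X × Y))) :=
  A.rels.image (tildeRel (Y := Y)) ∪ (B.rels.erase (diagRel Y)).image (barRel (X := X))

/-- The trivial central primitive idempotent
`e₀ = ∑_u n_u⁻¹ ε_{(x₀,y₀)u} J ε_{(x₀,y₀)u}` of `T(S ≀ T)`. -/
noncomputable def wreathTriv (A : AssocScheme X) (B : AssocScheme Y) (x₀ : X) (y₀ : Y) :
    Matrix (X × Y) (X × Y) ℂ :=
  ∑ u ∈ wreathRels A B, ((valency u : ℂ)⁻¹) •
    (eps (pointFiber (x₀, y₀) u) * allOnes (X × Y) * eps (pointFiber (x₀, y₀) u))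

/-- `ω = e^{2πi/3}`. -/
noncomputable def omega3 : ℂ := Complex.exp (2 * Real.pi * Complex.I / 3)

/-- The shifted matching matrix `∑_i E_{y_{t(i)}, y_{t'(i+k)}}` on `y₀t × y₀t'`. -/
noncomputable def cyc (enum : Finset (Y × Y) → Fin 3 → Y) (t t' : Finset (Y × Y))
    (k : Fin 3) : Matrix Y Y ℂ :=
  ∑ i : Fin 3, Matrix.single (enum t i) (enum t' (i + k)) 1

/-- `G_{y₀t, y₀t'}`. -/
noncomputable def Gmat (X : Type*) [Fintype X] (enum : Finset (Y × Y) → Fin 3 → Y)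
    (t t' : Finset (Y × Y)) : Matrix (X × Y) (X × Y) ℂ :=
  ((3 * (Fintype.card X : ℂ))⁻¹) •
    (allOnes X ⊗ₖ (cyc enum t t' 0 + omega3 • cyc enum t t' 1 + omega3 ^ 2 • cyc enum t t' 2))

/-- `G'_{y₀t, y₀t'}`. -/
noncomputable def Gmat' (X : Type*) [Fintype X] (enum : Finset (Y × Y) → Fin 3 → Y)
    (t t' : Finset (Y × Y)) : Matrix (X × Y) (X × Y) ℂ :=
  ((3 * (Fintype.card X : ℂ))⁻¹) •
    (allOnes X ⊗ₖ (cyc enum t t' 0 + omega3 ^ 2 • cyc enum t t' 1 + omega3 • cyc enum t t' 2))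

/-- `enum` enumerates each set `y₀t` (for non-identity `t`) by `Fin 3`. -/
def IsEnum (B : AssocScheme Y) (y₀ : Y) (enum : Finset (Y × Y) → Fin 3 → Y) : Prop :=
  ∀ t ∈ B.rels, t ≠ diagRel Y →
    Function.Injective (enum t) ∧ ∀ y, y ∈ pointFiber y₀ t ↔ ∃ i, enum t i = y

/-- The enumerations are well-ordering: every basic relation matrix of the
one-point-extension algebra which is nonzero on `y₀t × y₀t'` restricts there to one of
the cyclic permutation matrices `I, C, C²`. -/
def IsWellOrdering (B : AssocScheme Y) (y₀ : Y) (enum : Finset (Y × Y) → Fin 3 → Y) : Prop :=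
  IsEnum B y₀ enum ∧
  ∀ t ∈ B.rels, t ≠ diagRel Y → ∀ t' ∈ B.rels, t' ≠ diagRel Y →
    ∀ M : Matrix Y Y ℂ, IsBasicMatrix (onePointAlg B y₀) M →
      (∃ i j : Fin 3, M (enum t i) (enum t' j) ≠ 0) →
      ∃ k : Fin 3, ∀ i j : Fin 3,
        M (enum t i) (enum t' j) = if j = i + k then 1 else 0

/-- The set of all matrices `G_{y₀t, y₀t'}`, `t, t' ∈ T₃`. -/
noncomputable def GmatSet (X : Type*) [Fintype X] (B : AssocScheme Y)
    (enum : Finset (Y × Y) → Fin 3 → Y) : Set (Matrix (X × Y) (X × Y) ℂ) :=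
  {M | ∃ t ∈ B.rels.erase (diagRel Y), ∃ t' ∈ B.rels.erase (diagRel Y), M = Gmat X enum t t'}

/-- The set of all matrices `G'_{y₀t, y₀t'}`, `t, t' ∈ T₃`. -/
noncomputable def GmatSet' (X : Type*) [Fintype X] (B : AssocScheme Y)
    (enum : Finset (Y × Y) → Fin 3 → Y) : Set (Matrix (X × Y) (X × Y) ℂ) :=
  {M | ∃ t ∈ B.rels.erase (diagRel Y), ∃ t' ∈ B.rels.erase (diagRel Y), M = Gmat' X enum t t'}

/-- `e_{η1} = ∑_{t ∈ T₃} G_{y₀t, y₀t}`. -/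
noncomputable def etaOne (X : Type*) [Fintype X] (B : AssocScheme Y)
    (enum : Finset (Y × Y) → Fin 3 → Y) : Matrix (X × Y) (X × Y) ℂ :=
  ∑ t ∈ B.rels.erase (diagRel Y), Gmat X enum t t

/-- `e_{η2} = ∑_{t ∈ T₃} G'_{y₀t, y₀t}`. -/
noncomputable def etaTwo (X : Type*) [Fintype X] (B : AssocScheme Y)
    (enum : Finset (Y × Y) → Fin 3 → Y) : Matrix (X × Y) (X × Y) ℂ :=
  ∑ t ∈ B.rels.erase (diagRel Y), Gmat' X enum t t

end Wreath
section Aux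
set_option linter.unusedSectionVars false

open Finset

variable {Z : Type*} [Fintype Z] [DecidableEq Z]

lemma mem_diagRel {a b : Z} : (a, b) ∈ diagRel Z ↔ a = b := by
  simp [diagRel]

lemma mem_convRel {s : Finset (Z × Z)} {a b : Z} : (a, b) ∈ convRel s ↔ (b, a) ∈ s := by
  constructor
  · intro h
    simp only [convRel, Finset.mem_image] at h
    obtain ⟨p, hp, he⟩ := h
    obtain ⟨h1, h2⟩ := Prod.mk.injEq .. ▸ he
    subst h1; subst h2; simpa using hp
  · intro h
    simp only [convRel, Finset.mem_image]
    exact ⟨(b, a), h, rfl⟩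

lemma convRel_convRel (s : Finset (Z × Z)) : convRel (convRel s) = s := by
  ext ⟨a, b⟩; simp [mem_convRel]

lemma convRel_diag : convRel (diagRel Z) = diagRel Z := by
  ext ⟨a, b⟩; simp [mem_convRel, mem_diagRel, eq_comm]

/-- counting function: number of `z` with `(a,z) ∈ s` and `(z,b) ∈ t`. -/
def pcount (s t : Finset (Z × Z)) (a b : Z) : ℕ :=
  (Finset.univ.filter fun z => (a, z) ∈ s ∧ (z, b) ∈ t).card

variable (B : AssocScheme Z)

lemma rel_unique {w w' : Finset (Z × Z)} (hw : w ∈ B.rels) (hw' : w' ∈ B.rels)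
    {p : Z × Z} (h : p ∈ w) (h' : p ∈ w') : w = w' := by
  by_contra hne
  have hd := B.pairwise_disjoint w hw w' hw' hne
  have : ({p} : Finset (Z × Z)) ≤ ⊥ :=
    hd (Finset.singleton_subset_iff.mpr h) (Finset.singleton_subset_iff.mpr h')
  simpa using this

lemma conv_ne_diag {w : Finset (Z × Z)} (h : w ≠ diagRel Z) : convRel w ≠ diagRel Z := by
  intro hc
  exact h (by rw [← convRel_convRel w, hc, convRel_diag])

lemma not_mem_of_ne_diag {w : Finset (Z × Z)} (hw : w ∈ B.rels) (h : w ≠ diagRel Z)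
    (a : Z) : (a, a) ∉ w := fun hm =>
  h (rel_unique B hw B.id_mem hm (mem_diagRel.mpr rfl))

lemma pcount_congr {s t w : Finset (Z × Z)} (hs : s ∈ B.rels) (ht : t ∈ B.rels)
    (hw : w ∈ B.rels) {a b a' b' : Z} (h : (a, b) ∈ w) (h' : (a', b') ∈ w) :
    pcount s t a b = pcount s t a' b' :=
  B.pconst s hs t ht w hw (a, b) h (a', b') h'

lemma pNum_eq_pcount {s t w : Finset (Z × Z)} (hs : s ∈ B.rels) (ht : t ∈ B.rels)
    (hw : w ∈ B.rels) {a b : Z} (h : (a, b) ∈ w) :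
    pNum s t w = pcount s t a b := by
  have hne : w.Nonempty := ⟨(a, b), h⟩
  rw [pNum, dif_pos hne]
  exact B.pconst s hs t ht w hw (hne.choose.1, hne.choose.2) (by simpa using hne.choose_spec) (a, b) h

/-- the unique basic relation containing `(a,b)`. -/
noncomputable def relOf (a b : Z) : Finset (Z × Z) := (B.cover (a, b)).choose

lemma relOf_mem (a b : Z) : relOf B a b ∈ B.rels := (B.cover (a, b)).choose_spec.1

lemma mem_relOf (a b : Z) : (a, b) ∈ relOf B a b := (B.cover (a, b)).choose_spec.2

lemma relOf_eq {w : Finset (Z × Z)} (hw : w ∈ B.rels) {a b : Z} (h : (a, b) ∈ w) :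
    relOf B a b = w :=
  rel_unique B (relOf_mem B a b) hw (mem_relOf B a b) h

lemma relOf_diag (a : Z) : relOf B a a = diagRel Z :=
  relOf_eq B B.id_mem (mem_diagRel.mpr rfl)

end Aux
section Aux2
set_option linter.unusedSectionVars false

open Finset

variable {Z : Type*} [Fintype Z] [DecidableEq Z]

lemma card_prod_filter_snd (P : Z × Z → Prop) [DecidablePred P] :
    (Finset.univ.filter P).card = ∑ y : Z, (Finset.univ.filter fun x => P (x, y)).card := by
  rw [Finset.card_eq_sum_card_fiberwise (fun p _ => Finset.mem_univ p.2)]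
  refine Finset.sum_congr rfl fun y _ => ?_
  refine Finset.card_bij (fun p _ => p.1) ?_ ?_ ?_
  · intro p hp
    simp only [Finset.mem_filter] at hp ⊢
    obtain ⟨⟨-, hP⟩, h2⟩ := hp
    refine ⟨Finset.mem_univ _, ?_⟩
    rw [← h2]; simpa using hP
  · intro p hp q hq h
    simp only [Finset.mem_filter] at hp hq
    exact Prod.ext h (hp.2.trans hq.2.symm)
  · intro x hx
    simp only [Finset.mem_filter] at hx
    exact ⟨(x, y), Finset.mem_filter.mpr ⟨Finset.mem_filter.mpr ⟨Finset.mem_univ _, hx.2⟩, rfl⟩, rfl⟩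

lemma card_prod_filter_fst (P : Z × Z → Prop) [DecidablePred P] :
    (Finset.univ.filter P).card = ∑ x : Z, (Finset.univ.filter fun y => P (x, y)).card := by
  rw [Finset.card_eq_sum_card_fiberwise (fun p _ => Finset.mem_univ p.1)]
  refine Finset.sum_congr rfl fun x _ => ?_
  refine Finset.card_bij (fun p _ => p.2) ?_ ?_ ?_
  · intro p hp
    simp only [Finset.mem_filter] at hp ⊢
    obtain ⟨⟨-, hP⟩, h2⟩ := hp
    refine ⟨Finset.mem_univ _, ?_⟩
    rw [← h2]; simpa using hP
  · intro p hp q hq h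
    simp only [Finset.mem_filter] at hp hq
    exact Prod.ext (hp.2.trans hq.2.symm) h
  · intro y hy
    simp only [Finset.mem_filter] at hy
    exact ⟨(x, y), Finset.mem_filter.mpr ⟨Finset.mem_filter.mpr ⟨Finset.mem_univ _, hy.2⟩, rfl⟩, rfl⟩

lemma card_filter_guard (c : Prop) [Decidable c] (p : Z → Prop) [DecidablePred p] :
    (Finset.univ.filter fun z => c ∧ p z).card = if c then (Finset.univ.filter p).card else 0 := by
  split_ifs with h
  · congr 1
    apply Finset.filter_congr
    intro z _
    simp [h]
  · rw [Finset.filter_false_of_mem, Finset.card_empty]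
    intro z _
    simp [h]

lemma card_filter_guard_mid (p : Z → Prop) [DecidablePred p] (c : Prop) [Decidable c]
    (q : Z → Prop) [DecidablePred q] :
    (Finset.univ.filter fun z => p z ∧ c ∧ q z).card
      = if c then (Finset.univ.filter fun z => p z ∧ q z).card else 0 := by
  split_ifs with h
  · congr 1
    apply Finset.filter_congr
    intro z _
    simp [h]
  · rw [Finset.filter_false_of_mem, Finset.card_empty]
    intro z _
    simp [h]

lemma even_card_of_involution_aux {α : Type*} [DecidableEq α] :
    ∀ (n : ℕ) (S : Finset α), S.card = n → ∀ f : α → α, (∀ x ∈ S, f x ∈ S) →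
      (∀ x ∈ S, f (f x) = x) → (∀ x ∈ S, f x ≠ x) → Even S.card := by
  intro n
  induction n using Nat.strong_induction_on with
  | _ n ih =>
    intro S hn f hmem hinv hne
    rcases S.eq_empty_or_nonempty with rfl | ⟨x, hx⟩
    · simp
    · have hfx : f x ∈ S := hmem x hx
      have hxx : f x ≠ x := hne x hx
      set S' := (S.erase x).erase (f x) with hS'
      have hfe : f x ∈ S.erase x := Finset.mem_erase.mpr ⟨hxx, hfx⟩
      have hc1 : (S.erase x).card = S.card - 1 := Finset.card_erase_of_mem hx
      have hc2 : S'.card = (S.erase x).card - 1 := Finset.card_erase_of_mem hfe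
      have hpos : 1 ≤ S.card := Finset.card_pos.mpr ⟨x, hx⟩
      have hpos2 : 1 ≤ (S.erase x).card := Finset.card_pos.mpr ⟨f x, hfe⟩
      have hcard : S.card = S'.card + 2 := by omega
      have hmemS' : ∀ y ∈ S', y ∈ S := by
        intro y hy
        exact Finset.mem_of_mem_erase (Finset.mem_of_mem_erase hy)
      have hS'mem : ∀ y ∈ S', f y ∈ S' := by
        intro y hy
        have hyS : y ∈ S := hmemS' y hy
        have h1 : y ≠ f x := (Finset.mem_erase.mp hy).1
        have h2 : y ≠ x := (Finset.mem_erase.mp (Finset.mem_of_mem_erase hy)).1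
        refine Finset.mem_erase.mpr ⟨?_, Finset.mem_erase.mpr ⟨?_, hmem y hyS⟩⟩
        · intro h; exact h2 (by rw [← hinv y hyS, h, hinv x hx])
        · intro h; exact h1 (by rw [← hinv y hyS, h])
      have hev : Even S'.card := by
        refine ih S'.card (by omega) S' rfl f hS'mem ?_ ?_
        · intro y hy; exact hinv y (hmemS' y hy)
        · intro y hy; exact hne y (hmemS' y hy)
      rw [hcard]
      exact hev.add (even_iff_two_dvd.mpr ⟨1, rfl⟩)

lemma even_card_of_involution {α : Type*} [DecidableEq α] (S : Finset α) (f : α → α)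
    (hmem : ∀ x ∈ S, f x ∈ S) (hinv : ∀ x ∈ S, f (f x) = x) (hne : ∀ x ∈ S, f x ≠ x) :
    Even S.card :=
  even_card_of_involution_aux S.card S rfl f hmem hinv hne

lemma sum_eq_two_decomp {α : Type*} [DecidableEq α] {S : Finset α} {f : α → ℕ}
    (h : ∑ x ∈ S, f x = 2) :
    (∃ v ∈ S, f v = 2 ∧ ∀ w ∈ S, w ≠ v → f w = 0) ∨
    (∃ v ∈ S, ∃ w ∈ S, v ≠ w ∧ f v = 1 ∧ f w = 1 ∧
      ∀ x ∈ S, x ≠ v → x ≠ w → f x = 0) := by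
  classical
  set P := S.filter fun x => f x ≠ 0 with hP
  have hPsum : ∑ x ∈ P, f x = 2 := by
    rw [hP, Finset.sum_filter_ne_zero]; exact h
  have hzero : ∀ w ∈ S, w ∉ P → f w = 0 := by
    intro w hw hwP
    by_contra hfw
    exact hwP (Finset.mem_filter.mpr ⟨hw, hfw⟩)
  have hge : ∀ x ∈ P, 1 ≤ f x := fun x hx =>
    Nat.one_le_iff_ne_zero.mpr (Finset.mem_filter.mp hx).2
  have hcard : P.card ≤ 2 := by
    calc P.card = ∑ _x ∈ P, 1 := by simp
      _ ≤ ∑ x ∈ P, f x := Finset.sum_le_sum hge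
      _ = 2 := hPsum
  have hcard1 : 1 ≤ P.card := by
    by_contra hc
    push_neg at hc
    interval_cases hcP : P.card
    · rw [Finset.card_eq_zero] at hcP
      rw [hcP] at hPsum
      simp at hPsum
  interval_cases hcP : P.card
  · obtain ⟨v, hv⟩ := Finset.card_eq_one.mp hcP
    rw [hv] at hPsum
    simp at hPsum
    left
    refine ⟨v, Finset.filter_subset _ _ (hv ▸ Finset.mem_singleton_self v), hPsum, ?_⟩
    intro w hw hwv
    refine hzero w hw ?_
    rw [hv, Finset.mem_singleton]
    exact hwv
  · obtain ⟨v, w, hvw, hvwP⟩ := Finset.card_eq_two.mp hcP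
    rw [hvwP, Finset.sum_pair hvw] at hPsum
    have hv1 : 1 ≤ f v := hge v (hvwP ▸ Finset.mem_insert_self v {w})
    have hw1 : 1 ≤ f w := hge w (hvwP ▸ Finset.mem_insert.mpr (Or.inr (Finset.mem_singleton_self w)))
    right
    refine ⟨v, Finset.filter_subset _ _ (hvwP ▸ Finset.mem_insert_self v {w}),
      w, Finset.filter_subset _ _ (hvwP ▸ Finset.mem_insert.mpr (Or.inr (Finset.mem_singleton_self w))),
      hvw, by omega, by omega, ?_⟩
    intro x hx hxv hxw
    refine hzero x hx ?_
    rw [hvwP, Finset.mem_insert, Finset.mem_singleton]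
    push_neg
    exact ⟨hxv, hxw⟩

end Aux2
section Aux3
set_option linter.unusedSectionVars false

open Finset

variable {Z : Type*} [Fintype Z] [DecidableEq Z] (B : AssocScheme Z)
variable (hval : ∀ t ∈ B.rels, t ≠ diagRel Z → valency t = 3)
include hval

lemma row_card {w : Finset (Z × Z)} (hw : w ∈ B.rels) (hwd : w ≠ diagRel Z) (a : Z) :
    (Finset.univ.filter fun b => (a, b) ∈ w).card = 3 := by
  have h3 := hval w hw hwd
  unfold valency at h3
  rw [pNum_eq_pcount B hw (B.conv_mem w hw) B.id_mem (mem_diagRel.mpr rfl : ((a : Z), a) ∈ _)] at h3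
  rw [← h3, pcount]
  congr 1
  apply Finset.filter_congr
  intro z _
  simp [mem_convRel]

lemma col_card {w : Finset (Z × Z)} (hw : w ∈ B.rels) (hwd : w ≠ diagRel Z) (c : Z) :
    (Finset.univ.filter fun y => (y, c) ∈ w).card = 3 := by
  have h := row_card B hval (B.conv_mem w hw) (conv_ne_diag hwd) c
  rw [← h]
  congr 1
  apply Finset.filter_congr
  intro y _
  simp [mem_convRel]

lemma sum_pcount {s t : Finset (Z × Z)} (hs : s ∈ B.rels) (hsd : s ≠ diagRel Z)
    (ht : t ∈ B.rels) (htd : t ≠ diagRel Z) (a : Z) :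
    ∑ b : Z, pcount s t a b = 9 := by
  have hL : ∑ b : Z, pcount s t a b
      = (Finset.univ.filter fun p : Z × Z => (a, p.1) ∈ s ∧ (p.1, p.2) ∈ t).card := by
    rw [card_prod_filter_snd]
    rfl
  rw [hL, card_prod_filter_fst]
  have hx : ∀ x : Z, (Finset.univ.filter fun y => (a, x) ∈ s ∧ (x, y) ∈ t).card
      = if (a, x) ∈ s then 3 else 0 := by
    intro x
    rw [card_filter_guard]
    split_ifs with h
    · exact row_card B hval ht htd x
    · rfl
  rw [Finset.sum_congr rfl fun x _ => hx x, ← Finset.sum_filter,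
    Finset.sum_const, row_card B hval hs hsd a]
  rfl

lemma pnum_budget {s t : Finset (Z × Z)} (hs : s ∈ B.rels) (hsd : s ≠ diagRel Z)
    (ht : t ∈ B.rels) (htd : t ≠ diagRel Z) (a : Z) :
    pNum s t (diagRel Z) + (∑ w ∈ B.rels.erase (diagRel Z), pNum s t w) * 3 = 9 := by
  have h9 := sum_pcount B hval hs hsd ht htd a
  have hpart : ∑ b : Z, pcount s t a b
      = ∑ w ∈ B.rels, ∑ b ∈ Finset.univ.filter (fun b => relOf B a b = w), pcount s t a b :=
    (Finset.sum_fiberwise_of_maps_to (fun b _ => relOf_mem B a b) _).symm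
  have hinner : ∀ w ∈ B.rels,
      ∑ b ∈ Finset.univ.filter (fun b => relOf B a b = w), pcount s t a b
      = pNum s t w * (if w = diagRel Z then 1 else 3) := by
    intro w hw
    have hfe : Finset.univ.filter (fun b => relOf B a b = w)
        = Finset.univ.filter (fun b => (a, b) ∈ w) := by
      apply Finset.filter_congr
      intro b _
      constructor
      · intro h; rw [← h]; exact mem_relOf B a b
      · intro h; exact relOf_eq B hw h
    rw [hfe]
    have hconst : ∀ b ∈ Finset.univ.filter (fun b => (a, b) ∈ w),
        pcount s t a b = pNum s t w := by
      intro b hb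
      exact (pNum_eq_pcount B hs ht hw (Finset.mem_filter.mp hb).2).symm
    rw [Finset.sum_congr rfl hconst, Finset.sum_const, smul_eq_mul]
    by_cases hwd : w = diagRel Z
    · subst hwd
      rw [if_pos rfl]
      have hone : Finset.univ.filter (fun b => (a, b) ∈ diagRel Z) = {a} := by
        ext b
        simp [mem_diagRel, eq_comm]
      rw [hone]
      simp [mul_comm]
    · rw [if_neg hwd, row_card B hval hw hwd a, mul_comm]
  have h2 : ∑ w ∈ B.rels, pNum s t w * (if w = diagRel Z then 1 else 3) = 9 := by
    rw [← Finset.sum_congr rfl hinner, ← hpart, h9]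
  rw [← Finset.add_sum_erase _ _ B.id_mem] at h2
  rw [if_pos rfl, mul_one] at h2
  have h3 : ∑ w ∈ B.rels.erase (diagRel Z), pNum s t w * (if w = diagRel Z then 1 else 3)
      = (∑ w ∈ B.rels.erase (diagRel Z), pNum s t w) * 3 := by
    rw [Finset.sum_mul]
    apply Finset.sum_congr rfl
    intro w hw
    rw [if_neg (Finset.mem_erase.mp hw).1]
  rw [h3] at h2
  exact h2

end Aux3
section Aux4
set_option linter.unusedSectionVars false

open Finset

variable {Z : Type*} [Fintype Z] [DecidableEq Z] (B : AssocScheme Z)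
variable (hval : ∀ t ∈ B.rels, t ≠ diagRel Z → valency t = 3)
variable {u : Finset (Z × Z)} (hu : u ∈ B.rels) (hud : u ≠ diagRel Z)
include hval hu hud

lemma pcount_uu_comm (a b : Z) :
    pcount u (convRel u) a b = pcount u (convRel u) b a := by
  unfold pcount
  congr 1
  apply Finset.filter_congr
  intro z _
  simp only [mem_convRel]
  tauto

lemma pNum_uu'_diag [Nonempty Z] : pNum u (convRel u) (diagRel Z) = 3 := by
  obtain ⟨a⟩ := ‹Nonempty Z›
  rw [pNum_eq_pcount B hu (B.conv_mem u hu) B.id_mem (mem_diagRel.mpr rfl : ((a : Z), a) ∈ _)]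
  rw [← row_card B hval hu hud a, pcount]
  congr 1
  apply Finset.filter_congr
  intro z _
  simp [mem_convRel]

lemma sum_pnum_uu' [Nonempty Z] :
    ∑ w ∈ B.rels.erase (diagRel Z), pNum u (convRel u) w = 2 := by
  obtain ⟨a⟩ := ‹Nonempty Z›
  have hb := pnum_budget B hval hu hud (B.conv_mem u hu) (conv_ne_diag hud) a
  rw [pNum_uu'_diag B hval hu hud] at hb
  omega

lemma pnum_uu'_conv {w : Finset (Z × Z)} (hw : w ∈ B.rels) :
    pNum u (convRel u) (convRel w) = pNum u (convRel u) w := by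
  obtain ⟨⟨a, b⟩, hab⟩ := B.nonempty_mem w hw
  rw [pNum_eq_pcount B hu (B.conv_mem u hu) hw hab,
    pNum_eq_pcount B hu (B.conv_mem u hu) (B.conv_mem w hw) (mem_convRel.mpr hab : (b, a) ∈ _)]
  exact (pcount_uu_comm B hval hu hud a b).symm

/-- rotation identity: `pNum u u* w = k → pNum w u u = k`. -/
lemma pnum_rot [Nonempty Z] {w : Finset (Z × Z)} (hw : w ∈ B.rels) (hwd : w ≠ diagRel Z)
    {k : ℕ} (hk : pNum u (convRel u) w = k) : pNum w u u = k := by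
  obtain ⟨a⟩ := ‹Nonempty Z›
  have hfst := card_prod_filter_fst
    (fun p : Z × Z => (a, p.2) ∈ u ∧ (a, p.1) ∈ w ∧ (p.1, p.2) ∈ u)
  have hsnd := card_prod_filter_snd
    (fun p : Z × Z => (a, p.2) ∈ u ∧ (a, p.1) ∈ w ∧ (p.1, p.2) ∈ u)
  -- fst grouping : sum over b of guarded count
  have h1 : ∀ b : Z, (Finset.univ.filter fun z => (a, z) ∈ u ∧ (a, b) ∈ w ∧ (b, z) ∈ u).card
      = if (a, b) ∈ w then pcount u (convRel u) a b else 0 := by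
    intro b
    rw [card_filter_guard_mid]
    congr 1
    unfold pcount
    congr 1
    apply Finset.filter_congr
    intro z _
    simp [mem_convRel]
  have h2 : ∀ z : Z, (Finset.univ.filter fun b => (a, z) ∈ u ∧ (a, b) ∈ w ∧ (b, z) ∈ u).card
      = if (a, z) ∈ u then pcount w u a z else 0 := by
    intro z
    rw [card_filter_guard]
    rfl
  have hL : ∑ b : Z, (if (a, b) ∈ w then pcount u (convRel u) a b else 0) = 3 * k := by
    rw [← Finset.sum_filter]
    have hconst : ∀ b ∈ Finset.univ.filter (fun b => (a, b) ∈ w),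
        pcount u (convRel u) a b = k := by
      intro b hb
      rw [← pNum_eq_pcount B hu (B.conv_mem u hu) hw (Finset.mem_filter.mp hb).2]
      exact hk
    rw [Finset.sum_congr rfl hconst, Finset.sum_const, row_card B hval hw hwd a, smul_eq_mul]
  have hR : ∑ z : Z, (if (a, z) ∈ u then pcount w u a z else 0) = 3 * pNum w u u := by
    rw [← Finset.sum_filter]
    have hconst : ∀ z ∈ Finset.univ.filter (fun z => (a, z) ∈ u),
        pcount w u a z = pNum w u u := by
      intro z hz
      rw [← pNum_eq_pcount B hw hu hu (Finset.mem_filter.mp hz).2]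
    rw [Finset.sum_congr rfl hconst, Finset.sum_const, row_card B hval hu hud a, smul_eq_mul]
  have heq : (3 : ℕ) * k = 3 * pNum w u u := by
    rw [← hL, ← hR]
    rw [Finset.sum_congr rfl fun b _ => (h1 b).symm, Finset.sum_congr rfl fun z _ => (h2 z).symm]
    rw [← hfst, ← hsnd]
  omega

/-- the count of `w`-related ordered pairs inside the fiber `zu*`. -/
lemma clique_card {w : Finset (Z × Z)} (hw : w ∈ B.rels) (hws : convRel w = w) (z : Z) :
    (Finset.univ.filter fun p : Z × Z =>
      (p.1, z) ∈ u ∧ (p.2, z) ∈ u ∧ (p.1, p.2) ∈ w).card = 3 * pNum w u u := by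
  rw [card_prod_filter_snd]
  have h1 : ∀ y' : Z, (Finset.univ.filter fun y => (y, z) ∈ u ∧ (y', z) ∈ u ∧ (y, y') ∈ w).card
      = if (y', z) ∈ u then pcount w u y' z else 0 := by
    intro y'
    rw [card_filter_guard_mid]
    congr 1
    unfold pcount
    congr 1
    apply Finset.filter_congr
    intro y _
    constructor
    · rintro ⟨h1, h2⟩
      refine ⟨?_, h1⟩
      rw [← hws]
      exact mem_convRel.mpr h2
    · rintro ⟨h1, h2⟩
      refine ⟨h2, ?_⟩
      rw [← hws] at h1
      exact mem_convRel.mp h1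
  rw [Finset.sum_congr rfl fun y' _ => h1 y', ← Finset.sum_filter]
  have hconst : ∀ y' ∈ Finset.univ.filter (fun y' => (y', z) ∈ u),
      pcount w u y' z = pNum w u u := by
    intro y' hy'
    rw [← pNum_eq_pcount B hw hu hu (Finset.mem_filter.mp hy').2]
  rw [Finset.sum_congr rfl hconst, Finset.sum_const, col_card B hval hu hud z, smul_eq_mul]

/-- case B' is impossible : a symmetric relation with `pNum u u* w = 1`. -/
lemma caseB'_contradiction [Nonempty Z] {w : Finset (Z × Z)} (hw : w ∈ B.rels)
    (hwd : w ≠ diagRel Z) (hws : convRel w = w)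
    (h1 : pNum u (convRel u) w = 1) : False := by
  obtain ⟨z⟩ := ‹Nonempty Z›
  have hrot : pNum w u u = 1 := pnum_rot B hval hu hud hw hwd h1
  have hcard := clique_card B hval hu hud hw hws z
  rw [hrot, mul_one] at hcard
  have heven : Even (Finset.univ.filter fun p : Z × Z =>
      (p.1, z) ∈ u ∧ (p.2, z) ∈ u ∧ (p.1, p.2) ∈ w).card := by
    apply even_card_of_involution _ (fun p => (p.2, p.1))
    · intro p hp
      simp only [Finset.mem_filter] at hp ⊢
      obtain ⟨-, h1, h2, h3⟩ := hp
      refine ⟨Finset.mem_univ _, h2, h1, ?_⟩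
      rw [← hws]
      exact mem_convRel.mpr h3
    · intro p _
      rfl
    · intro p hp hfix
      simp only [Finset.mem_filter] at hp
      have : p.2 = p.1 := congrArg Prod.fst hfix
      exact not_mem_of_ne_diag B hw hwd p.1 (by rw [← this] at hp ⊢; exact hp.2.2.2)
  rw [hcard] at heven
  exact absurd heven (by decide)

end Aux4
section Aux5
set_option linter.unusedSectionVars false

open Finset

variable {Z : Type*} [Fintype Z] [DecidableEq Z] (B : AssocScheme Z)
variable (hval : ∀ t ∈ B.rels, t ≠ diagRel Z → valency t = 3)
variable {u v : Finset (Z × Z)} (hu : u ∈ B.rels) (hud : u ≠ diagRel Z)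
variable (hv : v ∈ B.rels) (hvd : v ≠ diagRel Z) (hvs : convRel v = v)
variable (hv2 : pNum u (convRel u) v = 2) (hvu : v ≠ u)
include hval hu hud hv hvd hvs hv2

lemma vmem_symm {x y : Z} (h : (x, y) ∈ v) : (y, x) ∈ v := by
  rw [← hvs]
  exact mem_convRel.mpr h

omit hv2 in
lemma clique_of_two (hk : pNum v u u = 2) :
    ∀ z y y', (y, z) ∈ u → (y', z) ∈ u → y ≠ y' → (y, y') ∈ v := by
  intro z y y' hy hy' hne
  have hT := clique_card B hval hu hud hv hvs z
  rw [hk] at hT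
  set T := Finset.univ.filter fun p : Z × Z =>
    (p.1, z) ∈ u ∧ (p.2, z) ∈ u ∧ (p.1, p.2) ∈ v with hTdef
  set U := Finset.univ.filter fun p : Z × Z =>
    (p.1, z) ∈ u ∧ (p.2, z) ∈ u ∧ p.1 ≠ p.2 with hUdef
  have hsub : T ⊆ U := by
    intro p hp
    simp only [hTdef, hUdef, Finset.mem_filter] at hp ⊢
    refine ⟨hp.1, hp.2.1, hp.2.2.1, fun he => ?_⟩
    exact not_mem_of_ne_diag B hv hvd p.2 (he ▸ hp.2.2.2)
  have hUcard : U.card = 6 := by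
    rw [hUdef, card_prod_filter_snd]
    have h1 : ∀ y' : Z, (Finset.univ.filter fun y => (y, z) ∈ u ∧ (y', z) ∈ u ∧ y ≠ y').card
        = if (y', z) ∈ u then 2 else 0 := by
      intro y'
      rw [card_filter_guard_mid]
      split_ifs with h
      · have : (Finset.univ.filter fun y => (y, z) ∈ u ∧ y ≠ y')
            = (Finset.univ.filter fun y => (y, z) ∈ u).erase y' := by
          rw [← Finset.filter_ne', Finset.filter_filter]
        rw [this]
        have hy'mem : y' ∈ Finset.univ.filter fun m => (m, z) ∈ u :=
          Finset.mem_filter.mpr ⟨Finset.mem_univ _, h⟩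
        rw [Finset.card_erase_of_mem hy'mem, col_card B hval hu hud z]
      · rfl
    rw [Finset.sum_congr rfl fun y' _ => h1 y', ← Finset.sum_filter, Finset.sum_const,
      col_card B hval hu hud z]
    rfl
  have hTU : T = U := Finset.eq_of_subset_of_card_le hsub (by omega)
  have : (y, y') ∈ U := by
    simp only [hUdef, Finset.mem_filter]
    exact ⟨Finset.mem_univ _, hy, hy', hne⟩
  rw [← hTU] at this
  simp only [hTdef, Finset.mem_filter] at this
  exact this.2.2.2

include hvu

lemma pnum_vu_diag [Nonempty Z] : pNum v u (diagRel Z) = 0 := by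
  obtain ⟨a⟩ := ‹Nonempty Z›
  rw [pNum_eq_pcount B hv hu B.id_mem (mem_diagRel.mpr rfl : ((a : Z), a) ∈ _)]
  rw [pcount, Finset.card_eq_zero, Finset.filter_eq_empty_iff]
  intro z _
  intro hcon
  obtain ⟨h1, h2⟩ := hcon
  exact hvu (rel_unique B hv hu (vmem_symm B hval hu hud hv hvd hvs hv2 h1) h2)

lemma sum_vu [Nonempty Z] : ∑ w ∈ B.rels.erase (diagRel Z), pNum v u w = 3 := by
  obtain ⟨a⟩ := ‹Nonempty Z›
  have hb := pnum_budget B hval hv hvd hu hud a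
  rw [pnum_vu_diag B hval hu hud hv hvd hvs hv2 hvu] at hb
  omega

lemma pvu_le [Nonempty Z] {x : Finset (Z × Z)} (hx : x ∈ B.rels) (hxd : x ≠ diagRel Z)
    (hxu : x ≠ u) : pNum v u x ≤ 1 := by
  have hk : pNum v u u = 2 := pnum_rot B hval hu hud hv hvd hv2
  have hsub : ({u, x} : Finset (Finset (Z × Z))) ⊆ B.rels.erase (diagRel Z) := by
    intro y hy
    rcases Finset.mem_insert.mp hy with rfl | hy
    · exact Finset.mem_erase.mpr ⟨hud, hu⟩
    · rw [Finset.mem_singleton] at hy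
      subst hy
      exact Finset.mem_erase.mpr ⟨hxd, hx⟩
  have hle : pNum v u u + pNum v u x ≤ ∑ w ∈ B.rels.erase (diagRel Z), pNum v u w := by
    rw [← Finset.sum_pair (fun h => hxu h.symm : u ≠ x)]
    exact Finset.sum_le_sum_of_subset hsub
  rw [sum_vu B hval hu hud hv hvd hvs hv2 hvu, hk] at hle
  omega

omit hvu in
lemma sum_vv [Nonempty Z] : ∑ w ∈ B.rels.erase (diagRel Z), pNum v v w = 2 := by
  obtain ⟨a⟩ := ‹Nonempty Z›
  have hdiag : pNum v v (diagRel Z) = 3 := by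
    rw [pNum_eq_pcount B hv hv B.id_mem (mem_diagRel.mpr rfl : ((a : Z), a) ∈ _)]
    rw [← row_card B hval hv hvd a, pcount]
    congr 1
    apply Finset.filter_congr
    intro z _
    constructor
    · exact fun h => h.1
    · exact fun h => ⟨h, vmem_symm B hval hu hud hv hvd hvs hv2 h⟩
  have hb := pnum_budget B hval hv hvd hv hvd a
  rw [hdiag] at hb
  omega

end Aux5
section Aux6
set_option linter.unusedSectionVars false

open Finset

variable {Z : Type*} [Fintype Z] [DecidableEq Z] (B : AssocScheme Z)
variable (hval : ∀ t ∈ B.rels, t ≠ diagRel Z → valency t = 3)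
variable {u v : Finset (Z × Z)} (hu : u ∈ B.rels) (hud : u ≠ diagRel Z)
variable (hv : v ∈ B.rels) (hvd : v ≠ diagRel Z) (hvs : convRel v = v)
variable (hv2 : pNum u (convRel u) v = 2)
include hval hu hud hv hvd hvs hv2

lemma pvvv_ge [Nonempty Z] : 2 ≤ pNum v v v := by
  have hk : pNum v u u = 2 := pnum_rot B hval hu hud hv hvd hv2
  have hclique := clique_of_two B hval hu hud hv hvd hvs hk
  obtain ⟨⟨y1, y2⟩, hy12⟩ := B.nonempty_mem v hv
  have hy1ne : y1 ≠ y2 := by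
    intro h
    exact not_mem_of_ne_diag B hv hvd y1 (h ▸ hy12)
  have hC : (Finset.univ.filter fun z => (y1, z) ∈ u ∧ (y2, z) ∈ u).card = 2 := by
    have h := pNum_eq_pcount B hu (B.conv_mem u hu) hv hy12
    rw [hv2] at h
    rw [h, pcount]
    congr 1
    apply Finset.filter_congr
    intro z _
    simp [mem_convRel]
  obtain ⟨z, z', hzz', hCzz⟩ := Finset.card_eq_two.mp hC
  have hz : (y1, z) ∈ u ∧ (y2, z) ∈ u := by
    have hm : z ∈ Finset.univ.filter fun m => (y1, m) ∈ u ∧ (y2, m) ∈ u := by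
      rw [hCzz]; simp
    exact (Finset.mem_filter.mp hm).2
  have hz' : (y1, z') ∈ u ∧ (y2, z') ∈ u := by
    have hm : z' ∈ Finset.univ.filter fun m => (y1, m) ∈ u ∧ (y2, m) ∈ u := by
      rw [hCzz]; simp
    exact (Finset.mem_filter.mp hm).2
  have hfib : ∀ m : Z, (Finset.univ.filter fun y => (y, m) ∈ u).card = 3 :=
    fun m => col_card B hval hu hud m
  have hthird : ∀ m : Z, (y1, m) ∈ u → (y2, m) ∈ u →
      ∃ s, (s, m) ∈ u ∧ s ≠ y1 ∧ s ≠ y2 ∧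
        Finset.univ.filter (fun y => (y, m) ∈ u) = {y1, y2, s} := by
    intro m h1 h2
    have hsub : ({y1, y2} : Finset Z) ⊆ Finset.univ.filter fun y => (y, m) ∈ u := by
      intro y hy
      rcases Finset.mem_insert.mp hy with rfl | hy
      · exact Finset.mem_filter.mpr ⟨Finset.mem_univ _, h1⟩
      · rw [Finset.mem_singleton] at hy
        subst hy
        exact Finset.mem_filter.mpr ⟨Finset.mem_univ _, h2⟩
    have hne : ((Finset.univ.filter fun y => (y, m) ∈ u) \ {y1, y2}).Nonempty := by
      rw [← Finset.card_pos, Finset.card_sdiff_of_subset hsub, hfib m, Finset.card_pair hy1ne]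
      norm_num
    obtain ⟨s, hs⟩ := hne
    rw [Finset.mem_sdiff] at hs
    obtain ⟨hs1, hs2⟩ := hs
    simp only [Finset.mem_insert, Finset.mem_singleton] at hs2
    push_neg at hs2
    refine ⟨s, (Finset.mem_filter.mp hs1).2, hs2.1, hs2.2, ?_⟩
    have hnm1 : y1 ∉ ({y2, s} : Finset Z) := by
      simp only [Finset.mem_insert, Finset.mem_singleton]
      push_neg
      exact ⟨hy1ne, fun h => hs2.1 h.symm⟩
    have hnm2 : y2 ∉ ({s} : Finset Z) := by
      simp only [Finset.mem_singleton]
      exact fun h => hs2.2 h.symm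
    have hcard3 : ({y1, y2, s} : Finset Z).card = 3 := by
      rw [Finset.card_insert_of_notMem hnm1, Finset.card_insert_of_notMem hnm2,
        Finset.card_singleton]
    refine (Finset.eq_of_subset_of_card_le ?_ ?_).symm
    · intro y hy
      simp only [Finset.mem_insert, Finset.mem_singleton] at hy
      rcases hy with rfl | rfl | rfl
      · exact Finset.mem_filter.mpr ⟨Finset.mem_univ _, h1⟩
      · exact Finset.mem_filter.mpr ⟨Finset.mem_univ _, h2⟩
      · exact hs1
    · rw [hfib m, hcard3]
  obtain ⟨s, hsu, hsy1, hsy2, hsfib⟩ := hthird z hz.1 hz.2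
  obtain ⟨s', hs'u, hs'y1, hs'y2, hs'fib⟩ := hthird z' hz'.1 hz'.2
  have hss' : s ≠ s' := by
    intro heq
    subst heq
    -- the two fibers coincide, contradicting pNum u* u ≤ 2
    have hle2 : pNum (convRel u) u (relOf B z z') ≤ 2 := by
      have hsum := sum_pnum_uu' B hval (B.conv_mem u hu) (conv_ne_diag hud)
        (u := convRel u)
      rw [convRel_convRel] at hsum
      have hmem : relOf B z z' ∈ B.rels.erase (diagRel Z) := by
        refine Finset.mem_erase.mpr ⟨?_, relOf_mem B z z'⟩
        intro hd
        have : (z, z') ∈ diagRel Z := hd ▸ mem_relOf B z z'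
        exact hzz' (mem_diagRel.mp this)
      calc pNum (convRel u) u (relOf B z z')
          ≤ ∑ w ∈ B.rels.erase (diagRel Z), pNum (convRel u) u w :=
            Finset.single_le_sum (fun w _ => Nat.zero_le _) hmem
        _ = 2 := hsum
    have h3 : pcount (convRel u) u z z' = 3 := by
      rw [pcount]
      have hcong : Finset.univ.filter (fun y => (z, y) ∈ convRel u ∧ (y, z') ∈ u)
          = Finset.univ.filter (fun y => (y, z) ∈ u) := by
        apply Finset.filter_congr
        intro y _
        simp only [mem_convRel]
        constructor
        · exact fun h => h.1
        · intro h
          refine ⟨h, ?_⟩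
          have h1 : y ∈ Finset.univ.filter (fun m => (m, z) ∈ u) :=
            Finset.mem_filter.mpr ⟨Finset.mem_univ _, h⟩
          rw [hsfib, ← hs'fib] at h1
          exact (Finset.mem_filter.mp h1).2
      rw [hcong, hfib z]
    rw [pNum_eq_pcount B (B.conv_mem u hu) hu (relOf_mem B z z') (mem_relOf B z z'), h3] at hle2
    omega
  have hM : ({s, s'} : Finset Z) ⊆ Finset.univ.filter fun m => (y1, m) ∈ v ∧ (m, y2) ∈ v := by
    intro x hx
    rcases Finset.mem_insert.mp hx with rfl | hx
    · exact Finset.mem_filter.mpr ⟨Finset.mem_univ _,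
        hclique z y1 x hz.1 hsu (Ne.symm hsy1), hclique z x y2 hsu hz.2 hsy2⟩
    · rw [Finset.mem_singleton] at hx
      subst hx
      exact Finset.mem_filter.mpr ⟨Finset.mem_univ _,
        hclique z' y1 x hz'.1 hs'u (Ne.symm hs'y1), hclique z' x y2 hs'u hz'.2 hs'y2⟩
  have hcard : 2 ≤ pcount v v y1 y2 := by
    rw [pcount]
    calc 2 = ({s, s'} : Finset Z).card := (Finset.card_pair hss').symm
      _ ≤ _ := Finset.card_le_card hM
  rw [← pNum_eq_pcount B hv hv hv hy12] at hcard
  exact hcard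

lemma trans_v [Nonempty Z] : ∀ a b c : Z, (a, b) ∈ v → (b, c) ∈ v → a ≠ c → (a, c) ∈ v := by
  intro a b c hab hbc hac
  have h1 : 1 ≤ pcount v v a c := by
    rw [pcount]
    exact Finset.card_pos.mpr ⟨b, Finset.mem_filter.mpr ⟨Finset.mem_univ _, hab, hbc⟩⟩
  set x := relOf B a c with hxdef
  have hx : x ∈ B.rels := relOf_mem B a c
  have hxd : x ≠ diagRel Z := by
    intro hd
    exact hac (mem_diagRel.mp (hd ▸ mem_relOf B a c))
  by_cases hxv : x = v
  · rw [← hxv]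
    exact mem_relOf B a c
  · exfalso
    have hpx : 1 ≤ pNum v v x := by
      rw [pNum_eq_pcount B hv hv hx (mem_relOf B a c)]
      exact h1
    have hsub : ({v, x} : Finset (Finset (Z × Z))) ⊆ B.rels.erase (diagRel Z) := by
      intro y hy
      rcases Finset.mem_insert.mp hy with rfl | hy
      · exact Finset.mem_erase.mpr ⟨hvd, hv⟩
      · rw [Finset.mem_singleton] at hy
        subst hy
        exact Finset.mem_erase.mpr ⟨hxd, hx⟩
    have hle : pNum v v v + pNum v v x ≤ ∑ w ∈ B.rels.erase (diagRel Z), pNum v v w := by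
      rw [← Finset.sum_pair (fun h => hxv h.symm : v ≠ x)]
      exact Finset.sum_le_sum_of_subset hsub
    rw [sum_vv B hval hu hud hv hvd hvs hv2] at hle
    have := pvvv_ge B hval hu hud hv hvd hvs hv2
    omega

end Aux6
section Aux7
set_option linter.unusedSectionVars false

open Finset

variable {Z : Type*} [Fintype Z] [DecidableEq Z] (B : AssocScheme Z)
variable (hval : ∀ t ∈ B.rels, t ≠ diagRel Z → valency t = 3)
variable {u v : Finset (Z × Z)} (hu : u ∈ B.rels) (hud : u ≠ diagRel Z)
variable (hv : v ∈ B.rels) (hvd : v ≠ diagRel Z) (hvs : convRel v = v)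
variable (hv2 : pNum u (convRel u) v = 2) (hvu : v ≠ u)
include hval hu hud hv hvd hvs hv2 hvu

lemma caseA_contradiction [Nonempty Z] : False := by
  have hk : pNum v u u = 2 := pnum_rot B hval hu hud hv hvd hv2
  have hclique := clique_of_two B hval hu hud hv hvd hvs hk
  have htrans := trans_v B hval hu hud hv hvd hvs hv2
  have hsymv : ∀ {x y : Z}, (x, y) ∈ v → (y, x) ∈ v :=
    fun h => vmem_symm B hval hu hud hv hvd hvs hv2 h
  obtain ⟨a⟩ := ‹Nonempty Z›
  set classF : Finset Z := insert a (Finset.univ.filter fun y => (a, y) ∈ v) with hclassF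
  have hmemclass : ∀ y : Z, y ∈ classF ↔ (y = a ∨ (a, y) ∈ v) := by
    intro y
    simp [hclassF]
  have hclasscard : classF.card = 4 := by
    rw [hclassF, Finset.card_insert_of_notMem, row_card B hval hv hvd a]
    intro hmem
    exact not_mem_of_ne_diag B hv hvd a (Finset.mem_filter.mp hmem).2
  have hclassclosed : ∀ y y₀ : Z, y ∈ classF → (y, y₀) ∈ v → y₀ ∈ classF := by
    intro y y₀ hy hyv
    rw [hmemclass] at hy ⊢
    rcases hy with rfl | hy
    · exact Or.inr hyv
    · by_cases h0 : y₀ = a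
      · exact Or.inl h0
      · refine Or.inr (htrans a y y₀ hy hyv (fun h => h0 h.symm))
  set F : Finset Z := Finset.univ.filter (fun c => ∀ y, (y, c) ∈ u → y ∈ classF) with hF
  set au : Finset Z := Finset.univ.filter (fun c => (a, c) ∈ u) with hau
  have hauF : au ⊆ F := by
    intro c hc
    have hac : (a, c) ∈ u := (Finset.mem_filter.mp hc).2
    rw [hF, Finset.mem_filter]
    refine ⟨Finset.mem_univ _, fun y hyc => ?_⟩
    rw [hmemclass]
    by_cases hya : y = a
    · exact Or.inl hya
    · exact Or.inr (hsymv (hclique c y a hyc hac hya))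
  -- each fiber through a point of classF is contained in classF
  have hfibsub : ∀ y c : Z, y ∈ classF → (y, c) ∈ u → c ∈ F := by
    intro y c hy hyc
    rw [hF, Finset.mem_filter]
    refine ⟨Finset.mem_univ _, fun y' hy'c => ?_⟩
    by_cases hyy' : y' = y
    · exact hyy' ▸ hy
    · exact hclassclosed y y' hy (hclique c y y' hyc hy'c (fun h => hyy' h.symm))
  -- double count : 12 = 3 * F.card
  have hP := card_prod_filter_fst (fun p : Z × Z => p.1 ∈ classF ∧ (p.1, p.2) ∈ u)
  have hP' := card_prod_filter_snd (fun p : Z × Z => p.1 ∈ classF ∧ (p.1, p.2) ∈ u)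
  have hL : ∑ x : Z, (Finset.univ.filter fun y => x ∈ classF ∧ (x, y) ∈ u).card = 12 := by
    have hx : ∀ x : Z, (Finset.univ.filter fun y => x ∈ classF ∧ (x, y) ∈ u).card
        = if x ∈ classF then 3 else 0 := by
      intro x
      rw [card_filter_guard]
      split_ifs with h
      · exact row_card B hval hu hud x
      · rfl
    rw [Finset.sum_congr rfl fun x _ => hx x, ← Finset.sum_filter, Finset.sum_const]
    rw [Finset.filter_mem_eq_inter, Finset.univ_inter, hclasscard]
    rfl
  have hR : ∀ c : Z, (Finset.univ.filter fun y => y ∈ classF ∧ (y, c) ∈ u).card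
      = if c ∈ F then 3 else 0 := by
    intro c
    split_ifs with hcF
    · have hcong : Finset.univ.filter (fun y => y ∈ classF ∧ (y, c) ∈ u)
          = Finset.univ.filter (fun y => (y, c) ∈ u) := by
        apply Finset.filter_congr
        intro y _
        constructor
        · exact fun h => h.2
        · intro h
          exact ⟨(Finset.mem_filter.mp hcF).2 y h, h⟩
      rw [hcong, col_card B hval hu hud c]
    · rw [Finset.card_eq_zero, Finset.filter_eq_empty_iff]
      intro y _
      intro hcon
      exact hcF (hfibsub y c hcon.1 hcon.2)
  have hFcard : F.card = 4 := by
    have h12 : ∑ c : Z, (if c ∈ F then 3 else 0) = 12 := by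
      rw [← Finset.sum_congr rfl fun c _ => hR c, ← hP', hP, hL]
    rw [← Finset.sum_filter, Finset.sum_const, Finset.filter_mem_eq_inter,
      Finset.univ_inter, smul_eq_mul] at h12
    omega
  -- pick c₀ ∈ F \ au
  have haucard : au.card = 3 := row_card B hval hu hud a
  have hns : ¬(F ⊆ au) := by
    intro hsub
    have := Finset.card_le_card hsub
    omega
  obtain ⟨c₀, hc₀F, hc₀au⟩ := Finset.not_subset.mp hns
  have hc₀u : (a, c₀) ∉ u := by
    intro h
    exact hc₀au (Finset.mem_filter.mpr ⟨Finset.mem_univ _, h⟩)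
  -- now pcount v u a c₀ = 3
  have hG : pcount v u a c₀ = 3 := by
    rw [pcount]
    have hcong : Finset.univ.filter (fun z => (a, z) ∈ v ∧ (z, c₀) ∈ u)
        = Finset.univ.filter (fun z => (z, c₀) ∈ u) := by
      apply Finset.filter_congr
      intro b _
      constructor
      · exact fun h => h.2
      · intro h
        refine ⟨?_, h⟩
        have hb : b ∈ classF := (Finset.mem_filter.mp hc₀F).2 b h
        rw [hmemclass] at hb
        rcases hb with rfl | hb
        · exact absurd h hc₀u
        · exact hb
    rw [hcong, col_card B hval hu hud c₀]
  set x := relOf B a c₀ with hxdef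
  have hx : x ∈ B.rels := relOf_mem B a c₀
  have h3 : pNum v u x = 3 := by
    rw [pNum_eq_pcount B hv hu hx (mem_relOf B a c₀)]
    exact hG
  by_cases hxd : x = diagRel Z
  · rw [hxd, pnum_vu_diag B hval hu hud hv hvd hvs hv2 hvu] at h3
    omega
  · by_cases hxu : x = u
    · exact hc₀u (hxu ▸ mem_relOf B a c₀)
    · have := pvu_le B hval hu hud hv hvd hvs hv2 hvu hx hxd hxu
      omega

end Aux7
section Aux8
set_option linter.unusedSectionVars false

open Finset

variable {Z : Type*} [Fintype Z] [DecidableEq Z] (B : AssocScheme Z)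

lemma adjMul_apply (s t : Finset (Z × Z)) (a b : Z) :
    (adjMat s * adjMat t) a b = (pcount s t a b : ℂ) := by
  rw [Matrix.mul_apply]
  have h : ∀ z : Z, adjMat s a z * adjMat t z b
      = if ((a, z) ∈ s ∧ (z, b) ∈ t) then (1 : ℂ) else 0 := by
    intro z
    simp only [adjMat, Matrix.of_apply]
    by_cases h1 : (a, z) ∈ s <;> by_cases h2 : (z, b) ∈ t <;> simp [h1, h2]
  rw [Finset.sum_congr rfl fun z _ => h z, Finset.sum_boole, pcount]

variable (hval : ∀ t ∈ B.rels, t ≠ diagRel Z → valency t = 3)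
variable {u : Finset (Z × Z)} (hu : u ∈ B.rels) (hud : u ≠ diagRel Z)
include hval hu hud

lemma matrix_eq_case_i [Nonempty Z] {w : Finset (Z × Z)} (hw : w ∈ B.rels)
    (hwd : w ≠ diagRel Z) (hwne : w ≠ convRel w)
    (h1 : pNum u (convRel u) w = 1) (h1' : pNum u (convRel u) (convRel w) = 1)
    (hrest : ∀ x ∈ B.rels.erase (diagRel Z), x ≠ w → x ≠ convRel w →
      pNum u (convRel u) x = 0) :
    adjMat u * adjMat (convRel u) =
      (3 : ℂ) • adjMat (diagRel Z) + adjMat w + adjMat (convRel w) := by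
  ext a b
  rw [adjMul_apply]
  simp only [Matrix.add_apply, Matrix.smul_apply, adjMat, Matrix.of_apply, smul_eq_mul]
  by_cases hab : a = b
  · subst hab
    have hpc : pcount u (convRel u) a a = 3 := by
      rw [← pNum_eq_pcount B hu (B.conv_mem u hu) B.id_mem (mem_diagRel.mpr rfl : ((a:Z), a) ∈ _)]
      exact pNum_uu'_diag B hval hu hud
    rw [hpc, if_pos (mem_diagRel.mpr rfl), if_neg (not_mem_of_ne_diag B hw hwd a),
      if_neg (not_mem_of_ne_diag B (B.conv_mem w hw) (conv_ne_diag hwd) a)]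
    norm_num
  · have hnd : (a, b) ∉ diagRel Z := fun h => hab (mem_diagRel.mp h)
    set r := relOf B a b with hrdef
    have hr : r ∈ B.rels := relOf_mem B a b
    have hrd : r ≠ diagRel Z := fun h => hab (mem_diagRel.mp (h ▸ mem_relOf B a b))
    have hpc : pcount u (convRel u) a b = pNum u (convRel u) r :=
      (pNum_eq_pcount B hu (B.conv_mem u hu) hr (mem_relOf B a b)).symm
    have hdisj : w ≠ convRel w → Disjoint w (convRel w) :=
      fun hne => B.pairwise_disjoint w hw (convRel w) (B.conv_mem w hw) hne
    by_cases hrw : r = w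
    · have hmw : (a, b) ∈ w := hrw ▸ mem_relOf B a b
      have hnw' : (a, b) ∉ convRel w := by
        intro hm
        exact hwne (rel_unique B hw (B.conv_mem w hw) hmw hm)
      rw [hpc, hrw, h1, if_neg hnd, if_pos hmw, if_neg hnw']
      norm_num
    · by_cases hrw' : r = convRel w
      · have hmw' : (a, b) ∈ convRel w := hrw' ▸ mem_relOf B a b
        have hnw : (a, b) ∉ w := by
          intro hm
          exact hwne (rel_unique B hw (B.conv_mem w hw) hm hmw')
        rw [hpc, hrw', h1', if_neg hnd, if_neg hnw, if_pos hmw']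
        norm_num
      · have hnw : (a, b) ∉ w := fun hm => hrw (rel_unique B hr hw (mem_relOf B a b) hm)
        have hnw' : (a, b) ∉ convRel w :=
          fun hm => hrw' (rel_unique B hr (B.conv_mem w hw) (mem_relOf B a b) hm)
        rw [hpc, hrest r (Finset.mem_erase.mpr ⟨hrd, hr⟩) hrw hrw',
          if_neg hnd, if_neg hnw, if_neg hnw']
        norm_num

lemma matrix_eq_case_ii [Nonempty Z] (h2 : pNum u (convRel u) u = 2)
    (hrest : ∀ x ∈ B.rels.erase (diagRel Z), x ≠ u → pNum u (convRel u) x = 0) :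
    adjMat u * adjMat (convRel u) =
      (3 : ℂ) • adjMat (diagRel Z) + (2 : ℂ) • adjMat u := by
  ext a b
  rw [adjMul_apply]
  simp only [Matrix.add_apply, Matrix.smul_apply, adjMat, Matrix.of_apply, smul_eq_mul]
  by_cases hab : a = b
  · subst hab
    have hpc : pcount u (convRel u) a a = 3 := by
      rw [← pNum_eq_pcount B hu (B.conv_mem u hu) B.id_mem (mem_diagRel.mpr rfl : ((a:Z), a) ∈ _)]
      exact pNum_uu'_diag B hval hu hud
    rw [hpc, if_pos (mem_diagRel.mpr rfl), if_neg (not_mem_of_ne_diag B hu hud a)]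
    norm_num
  · have hnd : (a, b) ∉ diagRel Z := fun h => hab (mem_diagRel.mp h)
    set r := relOf B a b with hrdef
    have hr : r ∈ B.rels := relOf_mem B a b
    have hrd : r ≠ diagRel Z := fun h => hab (mem_diagRel.mp (h ▸ mem_relOf B a b))
    have hpc : pcount u (convRel u) a b = pNum u (convRel u) r :=
      (pNum_eq_pcount B hu (B.conv_mem u hu) hr (mem_relOf B a b)).symm
    by_cases hru : r = u
    · have hmu : (a, b) ∈ u := hru ▸ mem_relOf B a b
      rw [hpc, hru, h2, if_neg hnd, if_pos hmu]
      norm_num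
    · have hnu : (a, b) ∉ u := fun hm => hru (rel_unique B hr hu (mem_relOf B a b) hm)
      rw [hpc, hrest r (Finset.mem_erase.mpr ⟨hrd, hr⟩) hru, if_neg hnd, if_neg hnu]
      norm_num

omit hval hud in
lemma not_both {w : Finset (Z × Z)} (hw : w ∈ B.rels) (hwne : w ≠ convRel w)
    (h1 : adjMat u * adjMat (convRel u) =
      (3 : ℂ) • adjMat (diagRel Z) + adjMat w + adjMat (convRel w))
    (h2 : adjMat u * adjMat (convRel u) =
      (3 : ℂ) • adjMat (diagRel Z) + (2 : ℂ) • adjMat u) : False := by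
  obtain ⟨⟨a, b⟩, hab⟩ := B.nonempty_mem w hw
  have hwd : w ≠ diagRel Z := by
    intro h
    exact hwne (by rw [h, convRel_diag])
  have habne : a ≠ b := by
    intro h
    exact not_mem_of_ne_diag B hw hwd a (h ▸ hab)
  have hnd : (a, b) ∉ diagRel Z := fun h => habne (mem_diagRel.mp h)
  have hnw' : (a, b) ∉ convRel w := by
    intro hm
    exact hwne (rel_unique B hw (B.conv_mem w hw) hab hm)
  have he := congrArg (fun M : Matrix Z Z ℂ => M a b) (h1.symm.trans h2)
  simp only [Matrix.add_apply, Matrix.smul_apply, adjMat, Matrix.of_apply, smul_eq_mul,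
    if_pos hab, if_neg hnd, if_neg hnw'] at he
  by_cases hu' : (a, b) ∈ u
  · rw [if_pos hu'] at he
    norm_num at he
  · rw [if_neg hu'] at he
    norm_num at he

end Aux8
section Statements

variable {X Y : Type*} [Fintype X] [DecidableEq X] [Fintype Y] [DecidableEq Y]

theorem stmt3 (B : AssocScheme Y) (h3 : ThreeEquivalenced B)
    (u : Finset (Y × Y)) (hu : u ∈ B.rels) (hu1 : u ≠ diagRel Y) :
    Xor'
      (∃ w ∈ B.rels, w ≠ convRel w ∧
        adjMat u * adjMat (convRel u) =
          (3 : ℂ) • adjMat (diagRel Y) + adjMat w + adjMat (convRel w))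
      (u = convRel u ∧
        adjMat u * adjMat (convRel u) =
          (3 : ℂ) • adjMat (diagRel Y) + (2 : ℂ) • adjMat u) := by
  obtain ⟨hcard, hval⟩ := h3
  have hNE : Nonempty Y := Fintype.card_pos_iff.mp (by omega)
  have hsum : ∑ w ∈ B.rels.erase (diagRel Y), pNum u (convRel u) w = 2 :=
    sum_pnum_uu' B hval hu hu1
  rcases sum_eq_two_decomp hsum with ⟨v, hvE, hv2, hrest⟩ |
    ⟨v, hvE, w, hwE, hvw, hv1, hw1, hrest⟩
  · -- single relation with coefficient 2
    have hv : v ∈ B.rels := (Finset.mem_erase.mp hvE).2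
    have hvd : v ≠ diagRel Y := (Finset.mem_erase.mp hvE).1
    have hvconv : convRel v = v := by
      by_contra hne
      have hcE : convRel v ∈ B.rels.erase (diagRel Y) :=
        Finset.mem_erase.mpr ⟨conv_ne_diag hvd, B.conv_mem v hv⟩
      have := hrest (convRel v) hcE hne
      rw [pnum_uu'_conv B hval hu hu1 hv, hv2] at this
      omega
    by_cases huv : v = u
    · rw [huv] at hvconv hv2 hrest
      right
      have heq2 : adjMat u * adjMat (convRel u) =
          (3 : ℂ) • adjMat (diagRel Y) + (2 : ℂ) • adjMat u :=
        matrix_eq_case_ii B hval hu hu1 hv2 (fun x hx hxu => hrest x hx hxu)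
      refine ⟨⟨hvconv.symm, heq2⟩, ?_⟩
      rintro ⟨w, hw, hwne, heq1⟩
      exact not_both B hu hw hwne heq1 heq2
    · exact absurd (caseA_contradiction B hval hu hu1 hv hvd hvconv hv2 huv) id
  · -- two relations with coefficient 1
    have hv : v ∈ B.rels := (Finset.mem_erase.mp hvE).2
    have hvd : v ≠ diagRel Y := (Finset.mem_erase.mp hvE).1
    have hw : w ∈ B.rels := (Finset.mem_erase.mp hwE).2
    have hwd : w ≠ diagRel Y := (Finset.mem_erase.mp hwE).1
    have hvcE : convRel v ∈ B.rels.erase (diagRel Y) :=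
      Finset.mem_erase.mpr ⟨conv_ne_diag hvd, B.conv_mem v hv⟩
    have hwcE : convRel w ∈ B.rels.erase (diagRel Y) :=
      Finset.mem_erase.mpr ⟨conv_ne_diag hwd, B.conv_mem w hw⟩
    have hvc1 : pNum u (convRel u) (convRel v) = 1 := by
      rw [pnum_uu'_conv B hval hu hu1 hv]; exact hv1
    have hwc1 : pNum u (convRel u) (convRel w) = 1 := by
      rw [pnum_uu'_conv B hval hu hu1 hw]; exact hw1
    have hvcases : convRel v = v ∨ convRel v = w := by
      by_contra hc
      push_neg at hc
      have := hrest (convRel v) hvcE hc.1 hc.2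
      omega
    rcases hvcases with hvsym | hvw'
    · -- v symmetric forces w symmetric : contradiction
      exfalso
      have hwsym : convRel w = w := by
        have hwcases : convRel w = v ∨ convRel w = w := by
          by_contra hc
          push_neg at hc
          have := hrest (convRel w) hwcE hc.1 hc.2
          omega
        rcases hwcases with h | h
        · exfalso
          apply hvw
          rw [← hvsym, ← h, convRel_convRel]
        · exact h
      exact caseB'_contradiction B hval hu hu1 hv hvd hvsym hv1
    · -- convRel v = w : conclusion (i)
      left
      have hvne : v ≠ convRel v := by
        rw [hvw']
        exact hvw
      have heq1 : adjMat u * adjMat (convRel u) =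
          (3 : ℂ) • adjMat (diagRel Y) + adjMat v + adjMat (convRel v) := by
        refine matrix_eq_case_i B hval hu hu1 hv hvd hvne hv1 ?_ ?_
        · rw [hvw']; exact hw1
        · intro x hx hxv hxv'
          rw [hvw'] at hxv'
          exact hrest x hx hxv hxv'
      refine ⟨⟨v, hv, hvne, heq1⟩, ?_⟩
      rintro ⟨-, heq2⟩
      exact not_both B hu hv hvne heq1 heq2

end Statements
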